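/- Let q be a symmetric coefficient family (q_k(i,j) = q_k(j,i) for all k,i,j), and for each 0 ≤ k ≤ n let A^k be the (r+1)×(r+1) complex matrix with entries (A^k)_{ij} = q_k(i,j), 0 ≤ i,j ≤ r. Then for every 0 ≤ k ≤ n/2 one has rank(A^k) = rank(A^{n−k}) and rank(A^k) ≤ 2m + k + 1. -/

import Mathlib

open Finset

noncomputable section

/-- `famN r m = 2r - 4m`, the highest weight `n` of the target representation. -/
def famN (r m : ℕ) : ℤ := 2 * (r : ℤ) - 4 * (m : ℤ)

/-- A *coefficient family* for parameters `r, m`: a function `q k i j` (complex valued,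
indices integers) that vanishes whenever `(k,i,j)` is out of range
(`0 ≤ k ≤ n`, `0 ≤ i,j ≤ r`, where `n = 2r - 4m`) and satisfies the sl₂-compatibility
relations (R1), (R2), (R3) for all admissible indices. -/
def IsCoeffFamily (r m : ℕ) (q : ℤ → ℤ → ℤ → ℂ) : Prop :=
  (∀ k i j : ℤ,
      ¬(0 ≤ k ∧ k ≤ famN r m ∧ 0 ≤ i ∧ i ≤ (r : ℤ) ∧ 0 ≤ j ∧ j ≤ (r : ℤ)) →
      q k i j = 0) ∧
  (∀ k i j : ℤ, 0 ≤ k → k ≤ famN r m → 0 ≤ i → i ≤ (r : ℤ) → 0 ≤ j → j ≤ (r : ℤ) →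
      (k : ℂ) * q (k - 1) i j
        = ((i : ℂ) + 1) * q k (i + 1) j + ((j : ℂ) + 1) * q k i (j + 1)) ∧
  (∀ k i j : ℤ, 0 ≤ k → k ≤ famN r m → 0 ≤ i → i ≤ (r : ℤ) → 0 ≤ j → j ≤ (r : ℤ) →
      ((famN r m - k : ℤ) : ℂ) * q (k + 1) i j
        = (((r : ℤ) - i + 1 : ℤ) : ℂ) * q k (i - 1) j
          + (((r : ℤ) - j + 1 : ℤ) : ℂ) * q k i (j - 1)) ∧
  (∀ k i j : ℤ, 0 ≤ k → k ≤ famN r m → 0 ≤ i → i ≤ (r : ℤ) → 0 ≤ j → j ≤ (r : ℤ) →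
      ((famN r m - 2 * k - 2 * (r : ℤ) + 2 * i + 2 * j : ℤ) : ℂ) * q k i j = 0)

/-- Binomial coefficient `binom a b` for integers, interpreted as `0` when `b` is out of
the range `0 ≤ b ≤ a`, as a complex number. -/
def binomZ (a b : ℤ) : ℂ :=
  if 0 ≤ b ∧ b ≤ a then (Nat.choose a.toNat b.toNat : ℂ) else 0

/-- The *canonical coefficient family* with parameter `λ`: the coefficient family whose
level-0 component is `q₀ i j = (-1)^i * binom (2m) i * λ` if `i + j = 2m` and `0`
otherwise. -/
def IsCanonical (r m : ℕ) (lam : ℂ) (q : ℤ → ℤ → ℤ → ℂ) : Prop :=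
  IsCoeffFamily r m q ∧
  ∀ i j : ℤ, 0 ≤ i → i ≤ (r : ℤ) → 0 ≤ j → j ≤ (r : ℤ) →
    q 0 i j =
      if i + j = 2 * (m : ℤ) then (-1) ^ i.toNat * binomZ (2 * (m : ℤ)) i * lam else 0

open Matrix in
/-- Rank of a matrix is at most the number of (potentially) nonzero columns. -/
lemma rankAux_le_card_of_cols {N : ℕ} (M : Matrix (Fin N) (Fin N) ℂ) (s : Finset (Fin N))
    (h : ∀ j : Fin N, j ∉ s → ∀ i, M i j = 0) : M.rank ≤ s.card := by
  rw [Matrix.rank_eq_finrank_span_cols]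
  have hsub : Set.range Mᵀ ⊆ insert (0 : Fin N → ℂ) (Mᵀ '' (↑s : Set (Fin N))) := by
    rintro x ⟨j, rfl⟩
    by_cases hj : j ∈ s
    · exact Set.mem_insert_of_mem _ ⟨j, hj, rfl⟩
    · exact Set.mem_insert_iff.mpr (Or.inl (funext fun i => h j hj i))
  have hle : Submodule.span ℂ (Set.range Mᵀ) ≤ Submodule.span ℂ (Mᵀ '' (↑s : Set (Fin N))) :=
    le_trans (Submodule.span_mono hsub) (le_of_eq Submodule.span_insert_zero)
  calc Module.finrank ℂ (Submodule.span ℂ (Set.range Mᵀ))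
      ≤ Module.finrank ℂ (Submodule.span ℂ (Mᵀ '' (↑s : Set (Fin N)))) :=
        Submodule.finrank_mono hle
    _ ≤ (s.image Mᵀ).card := by
        rw [show Mᵀ '' (↑s : Set (Fin N)) = ↑(s.image Mᵀ) from Finset.coe_image.symm]
        exact finrank_span_finset_le_card _
    _ ≤ s.card := Finset.card_image_le

/-- Scaling by a nonzero scalar preserves the rank. -/
lemma rankAux_smul_eq {N : ℕ} {c : ℂ} (hc : c ≠ 0) (M : Matrix (Fin N) (Fin N) ℂ) :
    (c • M).rank = M.rank := by
  have h : (c • M).mulVecLin = c • M.mulVecLin := by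
    ext v i
    simp [Matrix.mulVecLin_apply, Matrix.smul_mulVec]
  rw [Matrix.rank, h, LinearMap.range_smul _ _ hc, Matrix.rank]

/-- A coefficient family vanishing at the seed `q 0 0 (2m)` is identically zero. -/
lemma zero_of_seed {r m : ℕ} (hm : 2 * m ≤ r) {q : ℤ → ℤ → ℤ → ℂ}
    (hq : IsCoeffFamily r m q) (h0 : q 0 0 (2 * (m : ℤ)) = 0) :
    ∀ k i j : ℤ, q k i j = 0 := by
  obtain ⟨hv, h1, h2, h3⟩ := hq
  have hn : famN r m = 2 * (r : ℤ) - 4 * (m : ℤ) := rfl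
  have hn0 : 0 ≤ famN r m := by omega
  have hdiag : ∀ t : ℕ, q 0 (t : ℤ) (2 * (m : ℤ) - t) = 0 := by
    intro t
    induction t with
    | zero => simpa using h0
    | succ t ih =>
      by_cases ht : (t : ℤ) + 1 ≤ 2 * (m : ℤ)
      · have hR := h1 0 (t : ℤ) (2 * (m : ℤ) - t - 1) le_rfl hn0 (by omega) (by omega)
          (by omega) (by omega)
        rw [show 2 * (m : ℤ) - t - 1 + 1 = 2 * (m : ℤ) - t from by ring, ih] at hR
        simp only [Int.cast_zero, zero_mul, mul_zero, add_zero] at hR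
        have hne : ((t : ℤ) : ℂ) + 1 ≠ 0 := by
          push_cast
          exact Nat.cast_add_one_ne_zero t
        have hz := (mul_eq_zero.mp hR.symm).resolve_left hne
        push_cast
        rw [show 2 * (m : ℤ) - ((t : ℤ) + 1) = 2 * (m : ℤ) - t - 1 from by ring]
        exact hz
      · exact hv _ _ _ (by omega)
  have h0full : ∀ i j : ℤ, q 0 i j = 0 := by
    intro i j
    by_cases hrange : 0 ≤ i ∧ i ≤ (r : ℤ) ∧ 0 ≤ j ∧ j ≤ (r : ℤ)
    · obtain ⟨hi, hi', hj, hj'⟩ := hrange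
      by_cases hij : i + j = 2 * (m : ℤ)
      · have hd := hdiag i.toNat
        rw [Int.toNat_of_nonneg hi] at hd
        rw [show j = 2 * (m : ℤ) - i from by omega]
        exact hd
      · have h3' := h3 0 i j le_rfl hn0 hi hi' hj hj'
        have hne : ((famN r m - 2 * 0 - 2 * (r : ℤ) + 2 * i + 2 * j : ℤ) : ℂ) ≠ 0 := by
          rw [Int.cast_ne_zero]
          omega
        exact (mul_eq_zero.mp h3').resolve_left hne
    · exact hv _ _ _ (by omega)
  have hlev : ∀ t : ℕ, ∀ i j : ℤ, q (t : ℤ) i j = 0 := by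
    intro t
    induction t with
    | zero => exact fun i j => by simpa using h0full i j
    | succ t ih =>
      intro i j
      by_cases hrange : (t : ℤ) + 1 ≤ famN r m ∧ 0 ≤ i ∧ i ≤ (r : ℤ) ∧ 0 ≤ j ∧ j ≤ (r : ℤ)
      · obtain ⟨hk, hi, hi', hj, hj'⟩ := hrange
        have hR := h2 (t : ℤ) i j (by omega) (by omega) hi hi' hj hj'
        rw [ih (i - 1) j, ih i (j - 1)] at hR
        simp only [mul_zero, add_zero] at hR
        have hne : ((famN r m - (t : ℤ) : ℤ) : ℂ) ≠ 0 := by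
          rw [Int.cast_ne_zero]
          omega
        have hz := (mul_eq_zero.mp hR).resolve_left hne
        push_cast
        exact hz
      · exact hv _ _ _ (by omega)
  intro k i j
  by_cases hk : 0 ≤ k
  · have := hlev k.toNat i j
    rwa [Int.toNat_of_nonneg hk] at this
  · exact hv _ _ _ (by omega)

/-- The reversed family `(k,i,j) ↦ q (n-k) (r-i) (r-j)` is again a coefficient family. -/
lemma tilde_family {r m : ℕ} {q : ℤ → ℤ → ℤ → ℂ} (hq : IsCoeffFamily r m q) :
    IsCoeffFamily r m (fun k i j => q (famN r m - k) ((r : ℤ) - i) ((r : ℤ) - j)) := by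
  obtain ⟨hv, h1, h2, h3⟩ := hq
  refine ⟨?_, ?_, ?_, ?_⟩
  · intro k i j h
    exact hv _ _ _ (by omega)
  · intro k i j hk hk' hi hi' hj hj'
    have hR := h2 (famN r m - k) ((r : ℤ) - i) ((r : ℤ) - j) (by omega) (by omega)
      (by omega) (by omega) (by omega) (by omega)
    simp only
    rw [show famN r m - (k - 1) = famN r m - k + 1 from by ring,
      show (r : ℤ) - (i + 1) = (r : ℤ) - i - 1 from by ring,
      show (r : ℤ) - (j + 1) = (r : ℤ) - j - 1 from by ring]
    push_cast at hR ⊢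
    linear_combination hR
  · intro k i j hk hk' hi hi' hj hj'
    have hR := h1 (famN r m - k) ((r : ℤ) - i) ((r : ℤ) - j) (by omega) (by omega)
      (by omega) (by omega) (by omega) (by omega)
    simp only
    rw [show famN r m - (k + 1) = famN r m - k - 1 from by ring,
      show (r : ℤ) - (i - 1) = (r : ℤ) - i + 1 from by ring,
      show (r : ℤ) - (j - 1) = (r : ℤ) - j + 1 from by ring]
    push_cast at hR ⊢
    linear_combination hR
  · intro k i j hk hk' hi hi' hj hj'
    have hR := h3 (famN r m - k) ((r : ℤ) - i) ((r : ℤ) - j) (by omega) (by omega)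
      (by omega) (by omega) (by omega) (by omega)
    simp only
    push_cast at hR ⊢
    linear_combination -hR

/-- Linear combinations of coefficient families are coefficient families. -/
lemma combo_family {r m : ℕ} {q q' : ℤ → ℤ → ℤ → ℂ} (hq : IsCoeffFamily r m q)
    (hq' : IsCoeffFamily r m q') (a b : ℂ) :
    IsCoeffFamily r m (fun k i j => a * q k i j - b * q' k i j) := by
  obtain ⟨hv, h1, h2, h3⟩ := hq
  obtain ⟨hv', h1', h2', h3'⟩ := hq'
  refine ⟨fun k i j h => by simp only [hv k i j h, hv' k i j h, mul_zero, sub_zero],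
    fun k i j hk hk' hi hi' hj hj' => by
      simp only
      linear_combination a * h1 k i j hk hk' hi hi' hj hj' - b * h1' k i j hk hk' hi hi' hj hj',
    fun k i j hk hk' hi hi' hj hj' => by
      simp only
      linear_combination a * h2 k i j hk hk' hi hi' hj hj' - b * h2' k i j hk hk' hi hi' hj hj',
    fun k i j hk hk' hi hi' hj hj' => by
      simp only
      linear_combination a * h3 k i j hk hk' hi hi' hj hj' - b * h3' k i j hk hk' hi hi' hj hj'⟩

/-- for a symmetric coefficient family, the matrices `A^k = (q_k(i,j))`
satisfy `rank A^k = rank A^{n-k}` and `rank A^k ≤ 2m + k + 1` for `0 ≤ k ≤ n/2`. -/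
theorem stmt5 (r m : ℕ) (hr : 2 ≤ r) (hm : 2 * m ≤ r)
    (q : ℤ → ℤ → ℤ → ℂ) (hq : IsCoeffFamily r m q)
    (hsym : ∀ k i j : ℤ, q k i j = q k j i) :
    ∀ k : ℤ, 0 ≤ k → 2 * k ≤ famN r m →
      (Matrix.of fun i j : Fin (r + 1) =>
          q k ((i : ℕ) : ℤ) ((j : ℕ) : ℤ)).rank
        = (Matrix.of fun i j : Fin (r + 1) =>
            q (famN r m - k) ((i : ℕ) : ℤ) ((j : ℕ) : ℤ)).rank ∧
      ((Matrix.of fun i j : Fin (r + 1) =>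
          q k ((i : ℕ) : ℤ) ((j : ℕ) : ℤ)).rank : ℤ) ≤ 2 * (m : ℤ) + k + 1  := by
  intro k hk0 hk2
  have hn : famN r m = 2 * (r : ℤ) - 4 * (m : ℤ) := rfl
  -- the rank bound
  have hbound : ((Matrix.of fun i j : Fin (r + 1) =>
      q k ((i : ℕ) : ℤ) ((j : ℕ) : ℤ)).rank : ℤ) ≤ 2 * (m : ℤ) + k + 1 := by
    set s : Finset (Fin (r + 1)) :=
      Finset.univ.filter (fun j : Fin (r + 1) => ((j : ℕ) : ℤ) ≤ 2 * (m : ℤ) + k) with hs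
    have hcols : ∀ j : Fin (r + 1), j ∉ s → ∀ i : Fin (r + 1),
        (Matrix.of fun i j : Fin (r + 1) => q k ((i : ℕ) : ℤ) ((j : ℕ) : ℤ)) i j = 0 := by
      intro j hj i
      have hj' : 2 * (m : ℤ) + k < ((j : ℕ) : ℤ) := by
        simp only [hs, Finset.mem_filter, Finset.mem_univ, true_and, not_le] at hj
        exact hj
      have hi' : ((i : ℕ) : ℤ) ≤ (r : ℤ) := by exact_mod_cast Nat.le_of_lt_succ i.isLt
      have hjr : ((j : ℕ) : ℤ) ≤ (r : ℤ) := by exact_mod_cast Nat.le_of_lt_succ j.isLt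
      have hR := hq.2.2.2 k ((i : ℕ) : ℤ) ((j : ℕ) : ℤ) hk0 (by omega)
        (by positivity) hi' (by positivity) hjr
      have hne : ((famN r m - 2 * k - 2 * (r : ℤ) + 2 * ((i : ℕ) : ℤ)
          + 2 * ((j : ℕ) : ℤ) : ℤ) : ℂ) ≠ 0 := by
        rw [Int.cast_ne_zero]
        omega
      exact (mul_eq_zero.mp hR).resolve_left hne
    have hrk := rankAux_le_card_of_cols _ s hcols
    have hcard : s.card ≤ (2 * (m : ℤ) + k).toNat + 1 := by
      have hc2 : s.card ≤ (Finset.range ((2 * (m : ℤ) + k).toNat + 1)).card := by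
        refine Finset.card_le_card_of_injOn (fun j => (j : ℕ)) ?_ ?_
        · intro j hj
          simp only [hs, Finset.mem_coe, Finset.mem_filter, Finset.mem_univ, true_and] at hj
          simp only [Finset.mem_coe, Finset.mem_range]
          omega
        · intro a _ b _ hab
          exact Fin.val_injective hab
      simpa using hc2
    have hfin := hrk.trans hcard
    have h2 : ((2 * (m : ℤ) + k).toNat : ℤ) = 2 * (m : ℤ) + k := Int.toNat_of_nonneg (by omega)
    calc ((Matrix.of fun i j : Fin (r + 1) =>
        q k ((i : ℕ) : ℤ) ((j : ℕ) : ℤ)).rank : ℤ)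
        ≤ (((2 * (m : ℤ) + k).toNat + 1 : ℕ) : ℤ) := by exact_mod_cast hfin
      _ = 2 * (m : ℤ) + k + 1 := by push_cast [h2]; ring
  refine ⟨?_, hbound⟩
  -- the rank symmetry
  have hqt := tilde_family hq
  by_cases hl : q 0 0 (2 * (m : ℤ)) = 0
  · have hz := zero_of_seed hm hq hl
    have e1 : (Matrix.of fun i j : Fin (r + 1) => q k ((i : ℕ) : ℤ) ((j : ℕ) : ℤ))
        = (Matrix.of fun i j : Fin (r + 1) =>
            q (famN r m - k) ((i : ℕ) : ℤ) ((j : ℕ) : ℤ)) := by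
      ext i j
      simp only [Matrix.of_apply]
      rw [hz, hz]
    rw [e1]
  · set lam := q 0 0 (2 * (m : ℤ)) with hlam
    set mu := q (famN r m) ((r : ℤ)) ((r : ℤ) - 2 * (m : ℤ)) with hmu
    have hmu0 : mu ≠ 0 := by
      intro h0
      apply hl
      have hz := zero_of_seed hm hqt
        (show q (famN r m - 0) ((r : ℤ) - 0) ((r : ℤ) - 2 * (m : ℤ)) = 0 by
          simpa only [sub_zero] using h0)
      have hzz := hz (famN r m) ((r : ℤ)) ((r : ℤ) - 2 * (m : ℤ))
      simp only [sub_self, sub_sub_cancel] at hzz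
      exact hzz
    have hp := zero_of_seed hm (combo_family hq hqt mu lam)
      (show mu * q 0 0 (2 * (m : ℤ))
          - lam * q (famN r m - 0) ((r : ℤ) - 0) ((r : ℤ) - 2 * (m : ℤ)) = 0 by
        simp only [sub_zero, ← hlam, ← hmu]
        ring)
    have hkey : ∀ k' a b : ℤ, mu * q k' a b
        = lam * q (famN r m - k') ((r : ℤ) - a) ((r : ℤ) - b) := by
      intro k' a b
      have hp' := hp k' a b
      linear_combination hp'
    have hrev : ∀ i : Fin (r + 1), ((Fin.rev i : ℕ) : ℤ) = (r : ℤ) - ((i : ℕ) : ℤ) := by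
      intro i
      have := i.isLt
      simp only [Fin.val_rev]
      omega
    have hMeq : (Matrix.of fun i j : Fin (r + 1) =>
          q (famN r m - k) ((i : ℕ) : ℤ) ((j : ℕ) : ℤ))
        = (mu / lam) • ((Matrix.of fun i j : Fin (r + 1) =>
            q k ((i : ℕ) : ℤ) ((j : ℕ) : ℤ)).submatrix Fin.revPerm Fin.revPerm) := by
      ext i j
      have h1 := hkey k ((r : ℤ) - ((i : ℕ) : ℤ)) ((r : ℤ) - ((j : ℕ) : ℤ))
      rw [show (r : ℤ) - ((r : ℤ) - ((i : ℕ) : ℤ)) = ((i : ℕ) : ℤ) from by ring,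
        show (r : ℤ) - ((r : ℤ) - ((j : ℕ) : ℤ)) = ((j : ℕ) : ℤ) from by ring] at h1
      simp only [Matrix.smul_apply, Matrix.submatrix_apply, Matrix.of_apply,
        Fin.revPerm_apply, smul_eq_mul]
      rw [hrev i, hrev j]
      field_simp
      linear_combination -h1
    rw [hMeq, rankAux_smul_eq (div_ne_zero hmu0 hl) _, Matrix.rank_submatrix]
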